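/- Under the same setup, U(t)⁻ᵀ U(s)* = exp((s-t)A₊*) - exp((t₁-t)A₊*) S̃(t₁-t) exp((t₁-s)A₊) W(s-t), and in particular U(t)⁻ᵀ U(t₁)* = exp((t₁-t)A₊*)(I - S̃(t₁-t) W(t₁-t)). -/

import Mathlib

open Matrix MeasureTheory NormedSpace
open scoped Matrix.Norms.L2Operator

/-- Explicit formula for the backward state transition map `U(t)⁻ᵀ U(s)ᵀ` of the
closed-loop system, and its specialization at `s = t₁`. -/
theorem state_transition_backward_formula
    {n m : ℕ} (Ap : Matrix (Fin n) (Fin n) ℝ) (B : Matrix (Fin n) (Fin m) ℝ)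
    (S P : Matrix (Fin n) (Fin n) ℝ) (t₁ : ℝ)
    (hHurwitz : ∀ μ ∈ spectrum ℂ (Ap.map (algebraMap ℝ ℂ)), μ.re < 0)
    (hS : S.IsSymm) (hP : P.IsSymm)
    (W : Matrix (Fin n) (Fin n) ℝ)
    (hW : W = ∫ s in Set.Ioi (0 : ℝ), exp (s • Ap) * B * Bᵀ * exp (s • Apᵀ))
    (Wf : ℝ → Matrix (Fin n) (Fin n) ℝ)
    (hWf : ∀ τ, Wf τ = W - exp (τ • Ap) * W * exp (τ • Apᵀ))
    (hinv : ∀ τ : ℝ, 0 ≤ τ → IsUnit (1 + Wf τ * (S - P)))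
    (St : ℝ → Matrix (Fin n) (Fin n) ℝ)
    (hSt : ∀ τ, St τ = (S - P) * (1 + Wf τ * (S - P))⁻¹)
    (U : ℝ → Matrix (Fin n) (Fin n) ℝ)
    (hU : ∀ t, U t = exp (-((t₁ - t) • Ap)) * (1 + Wf (t₁ - t) * (S - P)))
    (hUinv : ∀ t : ℝ, t ≤ t₁ → IsUnit (U t)) :
    (∀ t s : ℝ, t ≤ s → s ≤ t₁ →
      ((U t)⁻¹)ᵀ * (U s)ᵀ =
        exp ((s - t) • Apᵀ) -
          exp ((t₁ - t) • Apᵀ) * St (t₁ - t) * exp ((t₁ - s) • Ap) * Wf (s - t)) ∧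
    (∀ t : ℝ, t ≤ t₁ →
      ((U t)⁻¹)ᵀ * (U t₁)ᵀ =
        exp ((t₁ - t) • Apᵀ) * (1 - St (t₁ - t) * Wf (t₁ - t))) := by
  set Q : Matrix (Fin n) (Fin n) ℝ := S - P with hQ
  -- exponential group laws
  have hEE : ∀ a b c : ℝ, a + b = c → exp (a • Ap) * exp (b • Ap) = exp (c • Ap) := by
    intro a b c habc
    rw [← Matrix.exp_add_of_commute _ _ (((Commute.refl Ap).smul_left a).smul_right b),
      ← add_smul, habc]
  have hFF : ∀ a b c : ℝ, a + b = c → exp (a • Apᵀ) * exp (b • Apᵀ) = exp (c • Apᵀ) := by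
    intro a b c habc
    rw [← Matrix.exp_add_of_commute _ _ (((Commute.refl Apᵀ).smul_left a).smul_right b),
      ← add_smul, habc]
  -- transpose relations
  have hEt : ∀ a : ℝ, (exp (a • Ap))ᵀ = exp (a • Apᵀ) := by
    intro a
    rw [← Matrix.exp_transpose, Matrix.transpose_smul]
  have hFt : ∀ a : ℝ, (exp (a • Apᵀ))ᵀ = exp (a • Ap) := by
    intro a
    rw [← Matrix.exp_transpose, Matrix.transpose_smul, Matrix.transpose_transpose]
  -- W is symmetric
  have hWsym : Wᵀ = W := by
    have hT : ∀ X : Matrix (Fin n) (Fin n) ℝ,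
        (Matrix.transposeLinearEquiv (Fin n) (Fin n) ℝ ℝ).toContinuousLinearEquiv X = Xᵀ :=
      fun X => rfl
    rw [hW, ← hT]
    rw [← ContinuousLinearEquiv.integral_comp_comm]
    refine setIntegral_congr_fun measurableSet_Ioi (fun s _ => ?_)
    show (exp (s • Ap) * B * Bᵀ * exp (s • Apᵀ))ᵀ =
      exp (s • Ap) * B * Bᵀ * exp (s • Apᵀ)
    simp only [Matrix.transpose_mul, Matrix.transpose_transpose, hEt, hFt,
      Matrix.mul_assoc]
  have hQsym : Qᵀ = Q := by
    rw [hQ, Matrix.transpose_sub, hS.eq, hP.eq]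
  have hWfsym : ∀ τ : ℝ, (Wf τ)ᵀ = Wf τ := by
    intro τ
    rw [hWf τ]
    simp only [Matrix.transpose_sub, Matrix.transpose_mul, hWsym, hEt, hFt, mul_assoc]
  -- transpose of U
  have hUT : ∀ r : ℝ, (U r)ᵀ = (1 + Q * Wf (t₁ - r)) * exp (-(t₁ - r) • Apᵀ) := by
    intro r
    rw [hU r, Matrix.transpose_mul, Matrix.transpose_add, Matrix.transpose_one,
      Matrix.transpose_mul, hQsym, hWfsym]
    congr 1
    have hneg : (-((t₁ - r) • Ap))ᵀ = -(t₁ - r) • Apᵀ := by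
      rw [Matrix.transpose_neg, Matrix.transpose_smul, neg_smul]
    rw [← Matrix.exp_transpose, hneg]
  -- the key inverse-free difference identity
  have diff : ∀ σ τ : ℝ, Wf τ = Wf σ + exp (σ • Ap) * Wf (τ - σ) * exp (σ • Apᵀ) := by
    intro σ τ
    rw [hWf τ, hWf σ, hWf (τ - σ)]
    have h1 : exp (σ • Ap) * (W - exp ((τ - σ) • Ap) * W * exp ((τ - σ) • Apᵀ)) *
          exp (σ • Apᵀ)
        = exp (σ • Ap) * W * exp (σ • Apᵀ) - exp (τ • Ap) * W * exp (τ • Apᵀ) := by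
      rw [mul_sub, sub_mul]
      congr 1
      calc exp (σ • Ap) * (exp ((τ - σ) • Ap) * W * exp ((τ - σ) • Apᵀ)) *
            exp (σ • Apᵀ)
          = (exp (σ • Ap) * exp ((τ - σ) • Ap)) * W *
            (exp ((τ - σ) • Apᵀ) * exp (σ • Apᵀ)) := by
            simp only [mul_assoc]
        _ = exp (τ • Ap) * W * exp (τ • Apᵀ) := by
            rw [hEE σ (τ - σ) τ (by ring), hFF (τ - σ) σ τ (by ring), mul_assoc]
    rw [h1]
    abel
  -- key cancellation with the inverse:  (1 + Q * Wf τ) * St τ = Q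
  have key : ∀ τ : ℝ, 0 ≤ τ → (1 + Q * Wf τ) * St τ = Q := by
    intro τ hτ
    have hd : IsUnit (1 + Wf τ * Q).det :=
      (Matrix.isUnit_iff_isUnit_det _).mp (hinv τ hτ)
    rw [hSt τ, ← mul_assoc]
    have h1 : (1 + Q * Wf τ) * Q = Q * (1 + Wf τ * Q) := by noncomm_ring
    rw [h1, mul_assoc, Matrix.mul_nonsing_inv _ hd, mul_one]
  -- the main formula, with (U t)ᵀ multiplied through
  have main : ∀ t s : ℝ, t ≤ t₁ →
      (U s)ᵀ = (U t)ᵀ * (exp ((s - t) • Apᵀ) -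
        exp ((t₁ - t) • Apᵀ) * St (t₁ - t) * exp ((t₁ - s) • Ap) * Wf (s - t)) := by
    intro t s ht
    set τ := t₁ - t with hτdef
    set σ := t₁ - s with hσdef
    have hτ : 0 ≤ τ := by rw [hτdef]; linarith
    rw [hUT t, hUT s]
    have hst : s - t = τ - σ := by rw [hτdef, hσdef]; ring
    have hss : t₁ - s = σ := rfl
    rw [hst]
    rw [mul_sub]
    have h2 : (1 + Q * Wf τ) * exp (-τ • Apᵀ) * exp ((τ - σ) • Apᵀ)
        = (1 + Q * Wf τ) * exp (-σ • Apᵀ) := by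
      rw [mul_assoc, hFF (-τ) (τ - σ) (-σ) (by ring)]
    have h3 : (1 + Q * Wf τ) * exp (-τ • Apᵀ) *
          (exp (τ • Apᵀ) * St τ * exp (σ • Ap) * Wf (τ - σ))
        = Q * (exp (σ • Ap) * Wf (τ - σ)) := by
      calc (1 + Q * Wf τ) * exp (-τ • Apᵀ) *
            (exp (τ • Apᵀ) * St τ * exp (σ • Ap) * Wf (τ - σ))
          = ((1 + Q * Wf τ) * (exp (-τ • Apᵀ) * exp (τ • Apᵀ))) * St τ *
            (exp (σ • Ap) * Wf (τ - σ)) := by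
            simp only [mul_assoc]
        _ = Q * (exp (σ • Ap) * Wf (τ - σ)) := by
            rw [hFF (-τ) τ 0 (by ring), zero_smul, exp_zero, mul_one, key τ hτ]
    rw [h2, h3]
    rw [diff σ τ]
    have h4 : (1 + Q * (Wf σ + exp (σ • Ap) * Wf (τ - σ) * exp (σ • Apᵀ))) *
          exp (-σ • Apᵀ)
        = (1 + Q * Wf σ) * exp (-σ • Apᵀ) +
          Q * (exp (σ • Ap) * Wf (τ - σ) * exp (σ • Apᵀ)) * exp (-σ • Apᵀ) := by
      noncomm_ring
    have h5 : Q * (exp (σ • Ap) * Wf (τ - σ) * exp (σ • Apᵀ)) * exp (-σ • Apᵀ)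
        = Q * (exp (σ • Ap) * Wf (τ - σ)) := by
      simp only [mul_assoc]
      rw [hFF σ (-σ) 0 (by ring), zero_smul, exp_zero, mul_one]
    rw [h4, h5, add_sub_cancel_right]
  have hmain1 : ∀ t s : ℝ, t ≤ s → s ≤ t₁ →
      ((U t)⁻¹)ᵀ * (U s)ᵀ =
        exp ((s - t) • Apᵀ) -
          exp ((t₁ - t) • Apᵀ) * St (t₁ - t) * exp ((t₁ - s) • Ap) * Wf (s - t) := by
    intro t s hts hst₁
    have ht : t ≤ t₁ := hts.trans hst₁
    have hu : IsUnit ((U t)ᵀ).det := by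
      rw [Matrix.det_transpose]
      exact (Matrix.isUnit_iff_isUnit_det _).mp (hUinv t ht)
    have := Matrix.invertibleOfIsUnitDet _ hu
    rw [Matrix.transpose_nonsing_inv, main t s ht,
      Matrix.inv_mul_cancel_left_of_invertible]
  refine ⟨hmain1, fun t ht => ?_⟩
  have h := hmain1 t t₁ ht le_rfl
  rw [h, sub_self, zero_smul, exp_zero, mul_one, mul_sub, mul_one, mul_assoc]
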